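/- For any bandit policy π with horizon T over K arms, if the View mechanism V^π satisfies (ε,δ)-DP, then the Table mechanism M^π satisfies (ε, K^T·δ)-DP. -/
import Mathlib


/-!
Statement 0: For any bandit policy π and any ε ≥ 0, the Table mechanism M^π
satisfies ε-DP (i.e. (ε,0)-DP) if and only if the View mechanism V^π satisfies ε-DP.
-/

open scoped BigOperators

/-- A bandit policy for `K` arms: at step `t` (0-indexed), given the history of
(action, reward) pairs, it returns a probability vector over the `K` arms. -/
abbrev BPolicy (K : ℕ) := ℕ → List (Fin K × ℝ) → Fin K → ℝ

/-- The condition that a policy is an actual sequence of probability kernels. -/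
def IsBPolicy {K : ℕ} (π : BPolicy K) : Prop :=
  ∀ t h, (∀ a, 0 ≤ π t h a) ∧ ∑ a, π t h a = 1

/-- Auxiliary coercion of an index `s < t` into `Fin T` (for `t : Fin T`). -/
def Fin.embed {T : ℕ} (t : Fin T) (s : Fin t.val) : Fin T := ⟨s.val, s.isLt.trans t.isLt⟩

/-- The history `(a_1, r_1, …, a_{t-1}, r_{t-1})` built from a sequence of actions `a`
and a sequence of rewards `r`, as seen just before step `t`. -/
def histOf {K T : ℕ} (a : Fin T → Fin K) (r : Fin T → ℝ) (t : Fin T) : List (Fin K × ℝ) :=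
  List.ofFn fun s : Fin t.val => (a (t.embed s), r (t.embed s))

/-- The View mechanism `V^π`: probability that the policy `π`, fed the fixed list of
rewards `r`, produces the sequence of actions `a`:
`V^π_r(a_1,…,a_T) = ∏_t π_t(a_t | a_1, r_1, …, a_{t-1}, r_{t-1})`. -/
noncomputable def viewProb {K T : ℕ} (π : BPolicy K) (r : Fin T → ℝ) (a : Fin T → Fin K) : ℝ :=
  ∏ t : Fin T, π t.val (histOf a r t) (a t)

/-- The Table mechanism `M^π`: probability that the policy `π`, interacting with the
table of (potential) rewards `d`, produces the sequence of actions `a`: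
`M^π_d(a_1,…,a_T) = ∏_t π_t(a_t | a_1, x_{1,a_1}, …, a_{t-1}, x_{t-1,a_{t-1}})`. -/
noncomputable def tableProb {K T : ℕ} (π : BPolicy K) (d : Fin T → Fin K → ℝ)
    (a : Fin T → Fin K) : ℝ :=
  viewProb π (fun s => d s (a s)) a

/-- Two inputs (tables or lists, viewed as functions) are neighbouring when they differ
in exactly one coordinate. -/
def Adjacent {T : ℕ} {α : Type*} (x y : Fin T → α) : Prop :=
  ∃ j, x j ≠ y j ∧ ∀ i, i ≠ j → x i = y i

/-- `(ε,δ)`-differential privacy for a mechanism `M` with finite output space, with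
respect to a neighbouring relation `Neigh`: for all neighbouring inputs and all events
`E`, `M_d(E) ≤ e^ε · M_{d'}(E) + δ`. -/
def IsDP {I Ω : Type*} [Fintype Ω] (M : I → Ω → ℝ) (Neigh : I → I → Prop)
    (ε δ : ℝ) : Prop :=
  ∀ d d', Neigh d d' → ∀ E : Finset Ω,
    ∑ a ∈ E, M d a ≤ Real.exp ε * ∑ a ∈ E, M d' a + δ

/-!
Statement 3: For any bandit policy π with horizon T over K arms, if the View mechanism
V^π satisfies (ε,δ)-DP, then the Table mechanism M^π satisfies (ε, K^T·δ)-DP.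
-/

lemma histOf_snoc {K T : ℕ} (b : Fin T → Fin K) (k : Fin K) (r : Fin (T+1) → ℝ) (s : Fin T) :
    histOf (Fin.snoc b k) r s.castSucc = histOf b (fun i => r i.castSucc) s := by
  unfold histOf
  congr 1
  funext u
  have h1 : (Fin.castSucc s).embed u = Fin.castSucc (s.embed ⟨u.val, u.isLt⟩) := rfl
  rw [h1, Fin.snoc_castSucc]
  rfl

lemma histOf_snoc_last {K T : ℕ} (b : Fin T → Fin K) (k : Fin K) (r : Fin (T+1) → ℝ) :
    histOf (Fin.snoc b k) r (Fin.last T) =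
      List.ofFn (fun s : Fin T => (b s, r s.castSucc)) := by
  unfold histOf
  congr 1
  funext u
  have h1 : (Fin.last T).embed u = Fin.castSucc ⟨u.val, u.isLt⟩ := rfl
  rw [h1, Fin.snoc_castSucc]

lemma sum_viewProb {K : ℕ} (π : BPolicy K) (hπ : IsBPolicy π) :
    ∀ (T : ℕ) (r : Fin T → ℝ), ∑ a : Fin T → Fin K, viewProb π r a = 1 := by
  intro T
  induction T with
  | zero =>
    intro r
    simp [viewProb]
  | succ T ih =>
    intro r
    rw [← Equiv.sum_comp (Fin.snocEquiv (fun _ => Fin K))]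
    rw [Fintype.sum_prod_type_right]
    have key : ∀ (b : Fin T → Fin K) (k : Fin K),
        viewProb π r ((Fin.snocEquiv (fun _ => Fin K)) (k, b)) =
        viewProb π (fun i => r i.castSucc) b *
          π T (List.ofFn (fun s : Fin T => (b s, r s.castSucc))) k := by
      intro b k
      show viewProb π r (Fin.snoc b k) = _
      unfold viewProb
      rw [Fin.prod_univ_castSucc]
      congr 1
      · apply Finset.prod_congr rfl
        intro t _
        rw [histOf_snoc, Fin.snoc_castSucc]
        rfl
      · rw [Fin.snoc_last, histOf_snoc_last]
        rfl
    calc ∑ b : Fin T → Fin K, ∑ k : Fin K,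
          viewProb π r ((Fin.snocEquiv (fun _ => Fin K)) (k, b))
        = ∑ b : Fin T → Fin K, viewProb π (fun i => r i.castSucc) b := by
          apply Finset.sum_congr rfl
          intro b _
          rw [Finset.sum_congr rfl (fun k _ => key b k), ← Finset.mul_sum,
            (hπ T (List.ofFn (fun s : Fin T => (b s, r s.castSucc)))).2, mul_one]
      _ = 1 := ih _

lemma viewProb_nonneg {K T : ℕ} (π : BPolicy K) (hπ : IsBPolicy π) (r : Fin T → ℝ)
    (a : Fin T → Fin K) : 0 ≤ viewProb π r a :=
  Finset.prod_nonneg fun t _ => (hπ t.val (histOf a r t)).1 (a t)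

lemma viewProb_le_one {K T : ℕ} (π : BPolicy K) (hπ : IsBPolicy π) (r : Fin T → ℝ)
    (a : Fin T → Fin K) : viewProb π r a ≤ 1 := by
  apply Finset.prod_le_one
  · exact fun t _ => (hπ t.val (histOf a r t)).1 (a t)
  · intro t _
    obtain ⟨hpos, hsum⟩ := hπ t.val (histOf a r t)
    calc π t.val (histOf a r t) (a t) ≤ ∑ k, π t.val (histOf a r t) k :=
          Finset.single_le_sum (fun k _ => hpos k) (Finset.mem_univ _)
      _ = 1 := hsum

theorem table_dp_of_view_dp {K T : ℕ} (π : BPolicy K) (hπ : IsBPolicy π) (ε δ : ℝ)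
    (hview : IsDP (fun r : Fin T → ℝ => viewProb π r) Adjacent ε δ) :
    IsDP (fun d : Fin T → Fin K → ℝ => tableProb π d) Adjacent ε ((K : ℝ) ^ T * δ) := by
  intro d d' hadj E
  obtain ⟨j, hj, hoff⟩ := hadj
  have hadj01 : Adjacent (fun _ : Fin T => (0:ℝ)) (Function.update (fun _ => (0:ℝ)) j 1) :=
    ⟨j, by simp, fun i hi => by simp [Function.update_of_ne hi]⟩
  have hδ0 : 0 ≤ δ := by simpa using hview _ _ hadj01 ∅
  have hδ1 : 1 ≤ Real.exp ε + δ := by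
    have h := hview _ _ hadj01 Finset.univ
    rw [sum_viewProb π hπ T, sum_viewProb π hπ T, mul_one] at h
    exact h
  have key : ∀ a : Fin T → Fin K,
      tableProb π d a ≤ Real.exp ε * tableProb π d' a + δ := by
    intro a
    by_cases h : d j (a j) = d' j (a j)
    · have heq : (fun s => d s (a s)) = (fun s => d' s (a s)) := by
        funext s
        by_cases hs : s = j
        · subst hs; exact h
        · rw [hoff s hs]
      have htp : tableProb π d a = tableProb π d' a := by
        unfold tableProb; rw [heq]
      rw [htp]
      have h0 : 0 ≤ tableProb π d' a := viewProb_nonneg π hπ _ a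
      have h1 : tableProb π d' a ≤ 1 := viewProb_le_one π hπ _ a
      nlinarith [mul_nonneg h0 (by linarith : (0:ℝ) ≤ Real.exp ε + δ - 1),
        mul_nonneg (by linarith : (0:ℝ) ≤ 1 - tableProb π d' a) hδ0]
    · have hadjr : Adjacent (fun s => d s (a s)) (fun s => d' s (a s)) :=
        ⟨j, h, fun i hi => by simp only []; rw [hoff i hi]⟩
      have := hview _ _ hadjr {a}
      simpa [tableProb] using this
  calc ∑ a ∈ E, tableProb π d a
      ≤ ∑ a ∈ E, (Real.exp ε * tableProb π d' a + δ) :=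
        Finset.sum_le_sum fun a _ => key a
    _ = Real.exp ε * ∑ a ∈ E, tableProb π d' a + E.card * δ := by
        rw [Finset.sum_add_distrib, ← Finset.mul_sum, Finset.sum_const, nsmul_eq_mul]
    _ ≤ Real.exp ε * ∑ a ∈ E, tableProb π d' a + (K : ℝ) ^ T * δ := by
        have hcard : (E.card : ℝ) ≤ (K : ℝ) ^ T := by
          have h1 := Finset.card_le_univ E
          have h2 : Fintype.card (Fin T → Fin K) = K ^ T := by
            rw [Fintype.card_fun, Fintype.card_fin, Fintype.card_fin]
          rw [h2] at h1
          exact_mod_cast h1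
        nlinarith
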